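/- For every real number a, the equation t = cosh(t + a)·e^{-(t + a)} (equivalently t = (1 + e^{-2(t+a)})/2) has exactly one real solution t; moreover this solution satisfies t > 1/2. -/
import Mathlib


/-- For every real number `a`, the equation `t = cosh(t + a) * exp (-(t + a))`
has exactly one real solution `t`; moreover this solution satisfies `t > 1/2`. -/
theorem stmt0 (a : ℝ) :
    (∃! t : ℝ, t = Real.cosh (t + a) * Real.exp (-(t + a))) ∧
    (∀ t : ℝ, t = Real.cosh (t + a) * Real.exp (-(t + a)) → 1 / 2 < t) := by
  have key : ∀ t : ℝ, Real.cosh (t + a) * Real.exp (-(t + a))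
      = (1 + Real.exp (-2 * (t + a))) / 2 := by
    intro t
    have h1 : Real.exp (t + a) * Real.exp (-(t + a)) = 1 := by
      rw [← Real.exp_add, add_neg_cancel, Real.exp_zero]
    have h2 : Real.exp (-(t + a)) * Real.exp (-(t + a)) = Real.exp (-2 * (t + a)) := by
      rw [← Real.exp_add]; ring_nf
    rw [Real.cosh_eq, div_mul_eq_mul_div, add_mul, h1, h2]
  -- the auxiliary function
  set g : ℝ → ℝ := fun t => t - (1 + Real.exp (-2 * (t + a))) / 2 with hg
  have hmono : StrictMono g := by
    intro x y hxy
    have h : Real.exp (-2 * (y + a)) < Real.exp (-2 * (x + a)) :=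
      Real.exp_lt_exp.mpr (by linarith)
    simp only [hg]
    linarith
  have hcont : Continuous g := by
    simp only [hg]; fun_prop
  -- existence of a root of g
  set T : ℝ := (1 + Real.exp (-2 * (1 / 2 + a))) / 2 + 1 with hT
  have hTpos : (1 : ℝ) / 2 ≤ T := by
    have := Real.exp_pos (-2 * (1 / 2 + a))
    simp only [hT]; linarith
  have hg1 : g (1 / 2) < 0 := by
    have := Real.exp_pos (-2 * (1 / 2 + a))
    simp only [hg]; linarith
  have hg2 : 0 < g T := by
    have h : Real.exp (-2 * (T + a)) ≤ Real.exp (-2 * (1 / 2 + a)) :=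
      Real.exp_le_exp.mpr (by linarith)
    simp only [hg, hT]; linarith
  obtain ⟨c, hc, hc0⟩ : ∃ c ∈ Set.Icc (1 / 2 : ℝ) T, g c = 0 := by
    have := intermediate_value_Icc hTpos hcont.continuousOn
    exact this ⟨hg1.le, hg2.le⟩
  have hroot : ∀ t : ℝ, (t = Real.cosh (t + a) * Real.exp (-(t + a))) ↔ g t = 0 := by
    intro t
    rw [key t]
    simp only [hg]
    constructor <;> intro h <;> linarith
  constructor
  · refine ⟨c, (hroot c).mpr hc0, fun y hy => ?_⟩
    exact hmono.injective (((hroot y).mp hy).trans hc0.symm)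
  · intro t ht
    rw [key t] at ht
    have := Real.exp_pos (-2 * (t + a))
    linarith
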